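/- Let X be a locally compact Hausdorff space and let λ be a set function from the compact subsets of X to [-∞,∞] that assumes at most one of the values ∞, -∞, is not identically ∞ or -∞, and is finitely additive on compact sets. Then the set functions λ⁺, λ⁻ = (−λ)⁺, and |λ| are deficient topological measures on X, and |λ|(A) ≤ λ⁺(A) + λ⁻(A) for every set A that is open or closed. -/

import Mathlib

open Set Classical

variable {X : Type*}

/-- The positive variation on an open set: `λ⁺(U) = sup{λ(K) : K ⊆ U, K compact}`. -/
noncomputable def posVarOpen [TopologicalSpace X] (lam : Set X → EReal) (U : Set X) : EReal :=
  ⨆ (K : Set X) (_ : IsCompact K ∧ K ⊆ U), lam K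

/-- The positive variation: the sup formula on open sets, and
`λ⁺(F) = inf{λ⁺(U) : F ⊆ U, U open}` on other (in particular closed) sets. -/
noncomputable def posVar [TopologicalSpace X] (lam : Set X → EReal) (A : Set X) : EReal :=
  if IsOpen A then posVarOpen lam A
  else ⨅ (U : Set X) (_ : IsOpen U ∧ A ⊆ U), posVarOpen lam U

/-- The total variation on an open set:
`|λ|(U) = sup{∑ᵢ |λ(Kᵢ)| : K₁, …, Kₙ pairwise disjoint compact subsets of U}`. -/
noncomputable def totVarOpen [TopologicalSpace X] (lam : Set X → EReal) (U : Set X) : EReal :=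
  ⨆ (n : ℕ) (K : Fin n → Set X)
    (_ : (∀ i, IsCompact (K i) ∧ K i ⊆ U) ∧ Pairwise (Function.onFun Disjoint K)),
      ∑ i, max (lam (K i)) (-(lam (K i)))

/-- The total variation: the sup formula on open sets, and
`|λ|(F) = inf{|λ|(U) : F ⊆ U, U open}` on other (in particular closed) sets. -/
noncomputable def totVar [TopologicalSpace X] (lam : Set X → EReal) (A : Set X) : EReal :=
  if IsOpen A then totVarOpen lam A
  else ⨅ (U : Set X) (_ : IsOpen U ∧ A ⊆ U), totVarOpen lam U

/-- The negative variation `λ⁻ = (-λ)⁺`. -/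
noncomputable def negVar [TopologicalSpace X] (lam : Set X → EReal) : Set X → EReal :=
  posVar (fun K => -(lam K))

/-- A deficient topological measure on a locally compact space `X`: a set function on open
and closed subsets of `X` with values in `[0,∞]`, not identically `∞`, finitely additive on
compact sets, inner compact regular on open sets, and outer regular on closed sets.
(Values on sets that are neither open nor closed are irrelevant.) -/
def IsDTME [TopologicalSpace X] (ν : Set X → EReal) : Prop :=
  (∀ A : Set X, IsOpen A ∨ IsClosed A → 0 ≤ ν A) ∧
  (∃ A : Set X, (IsOpen A ∨ IsClosed A) ∧ ν A ≠ ⊤) ∧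
  (∀ C K : Set X, IsCompact C → IsCompact K → Disjoint C K → ν (C ∪ K) = ν C + ν K) ∧
  (∀ U : Set X, IsOpen U → ν U = ⨆ (K : Set X) (_ : IsCompact K ∧ K ⊆ U), ν K) ∧
  (∀ F : Set X, IsClosed F → ν F = ⨅ (U : Set X) (_ : IsOpen U ∧ F ⊆ U), ν U)

namespace Aux

lemma absE_nonneg (a : EReal) : 0 ≤ max a (-a) := by
  rcases le_total 0 a with h | h
  · exact le_max_of_le_left h
  · exact le_max_of_le_right (by rw [show (0:EReal) = -0 by simp]; exact EReal.neg_le_neg_iff.mpr h)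

lemma absE_ne_bot (a : EReal) : max a (-a) ≠ ⊥ :=
  (EReal.bot_lt_zero.trans_le (absE_nonneg a)).ne'

lemma absE_triangle (a b : EReal) : max (a+b) (-(a+b)) ≤ max a (-a) + max b (-b) := by
  induction a using EReal.rec with
  | bot =>
      rw [show max (⊥:EReal) (-(⊥:EReal)) = ⊤ by simp, EReal.top_add_of_ne_bot (absE_ne_bot b)]
      exact le_top
  | top =>
      rw [show max (⊤:EReal) (-(⊤:EReal)) = ⊤ by simp, EReal.top_add_of_ne_bot (absE_ne_bot b)]
      exact le_top
  | coe x =>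
    induction b using EReal.rec with
    | bot =>
        rw [show max (⊥:EReal) (-(⊥:EReal)) = ⊤ by simp, EReal.add_top_of_ne_bot (absE_ne_bot _)]
        exact le_top
    | top =>
        rw [show max (⊤:EReal) (-(⊤:EReal)) = ⊤ by simp, EReal.add_top_of_ne_bot (absE_ne_bot _)]
        exact le_top
    | coe y =>
        have e : ∀ z : ℝ, max (z:EReal) (-(z:EReal)) = ((|z| : ℝ) : EReal) := by
          intro z
          rw [← EReal.coe_neg, ← EReal.coe_strictMono.monotone.map_max, abs_eq_max_neg]
        have exy : ((x:EReal) + y) = ((x+y : ℝ):EReal) := by norm_cast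
        rw [exy, e, e, e, ← EReal.coe_add, EReal.coe_le_coe_iff]
        exact abs_add_le x y

lemma ne_bot_of_nonneg {a : EReal} (h : 0 ≤ a) : a ≠ ⊥ := (EReal.bot_lt_zero.trans_le h).ne'

lemma iSup_add_iSup_le {ι κ : Sort*} {f : ι → EReal} {g : κ → EReal} {c : EReal}
    (h : ∀ i j, f i + g j ≤ c) : (⨆ i, f i) + (⨆ j, g j) ≤ c := by
  refine EReal.add_le_of_forall_lt fun a ha b hb => ?_
  obtain ⟨i, hi⟩ := lt_iSup_iff.mp ha
  obtain ⟨j, hj⟩ := lt_iSup_iff.mp hb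
  exact (add_le_add hi.le hj.le).trans (h i j)

lemma le_iInf_add_iInf {ι κ : Sort*} {f : ι → EReal} {g : κ → EReal} {c : EReal}
    (h0f : ∀ i, 0 ≤ f i) (h0g : ∀ j, 0 ≤ g j)
    (h : ∀ i j, c ≤ f i + g j) : c ≤ (⨅ i, f i) + (⨅ j, g j) := by
  refine EReal.le_add_of_forall_gt (Or.inl (ne_bot_of_nonneg (le_iInf h0f)))
    (Or.inr (ne_bot_of_nonneg (le_iInf h0g))) fun a ha b hb => ?_
  obtain ⟨i, hi⟩ := iInf_lt_iff.mp ha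
  obtain ⟨j, hj⟩ := iInf_lt_iff.mp hb
  exact (h i j).trans (add_le_add hi.le hj.le)

end Aux

section PosVar
variable [TopologicalSpace X] {lam : Set X → EReal} {U V W A B C K F : Set X}

lemma le_posVarOpen (hK : IsCompact K) (hKU : K ⊆ U) : lam K ≤ posVarOpen lam U :=
  le_iSup₂_of_le K ⟨hK, hKU⟩ le_rfl

lemma posVarOpen_mono (h : U ⊆ V) : posVarOpen lam U ≤ posVarOpen lam V :=
  iSup₂_le fun K hK => le_posVarOpen hK.1 (hK.2.trans h)

lemma posVarOpen_nonneg (hz : lam ∅ = 0) : 0 ≤ posVarOpen lam U :=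
  hz ▸ le_posVarOpen isCompact_empty (empty_subset U)

lemma posVar_eq_iInf (lam : Set X → EReal) (A : Set X) :
    posVar lam A = ⨅ (U : Set X) (_ : IsOpen U ∧ A ⊆ U), posVarOpen lam U := by
  rw [posVar]; split_ifs with h
  · exact le_antisymm (le_iInf₂ fun U hU => posVarOpen_mono hU.2) (iInf₂_le A ⟨h, subset_rfl⟩)
  · rfl

lemma posVar_open (h : IsOpen A) : posVar lam A = posVarOpen lam A := if_pos h

lemma posVar_mono (h : A ⊆ B) : posVar lam A ≤ posVar lam B := by
  rw [posVar_eq_iInf, posVar_eq_iInf]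
  exact le_iInf₂ fun U hU => iInf₂_le U ⟨hU.1, h.trans hU.2⟩

lemma posVar_nonneg (hz : lam ∅ = 0) (A : Set X) : 0 ≤ posVar lam A := by
  rw [posVar_eq_iInf]; exact le_iInf₂ fun U hU => posVarOpen_nonneg hz

lemma le_posVar (hK : IsCompact K) (h : K ⊆ A) : lam K ≤ posVar lam A := by
  rw [posVar_eq_iInf]; exact le_iInf₂ fun U hU => le_posVarOpen hK (h.trans hU.2)

lemma posVar_empty (hz : lam ∅ = 0) : posVar lam ∅ = 0 := by
  rw [posVar_open isOpen_empty]
  refine le_antisymm (iSup₂_le fun K hK => ?_) (posVarOpen_nonneg hz)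
  rw [subset_empty_iff.mp hK.2, hz]

variable (haddv : ∀ C K : Set X, IsCompact C → IsCompact K → Disjoint C K →
      lam (C ∪ K) = lam C + lam K)

include haddv

lemma posVarOpen_union_le (hU : IsOpen U) (hV : IsOpen V) (hUV : Disjoint U V) :
    posVarOpen lam (U ∪ V) ≤ posVarOpen lam U + posVarOpen lam V := by
  refine iSup₂_le fun K hK => ?_
  obtain ⟨hKc, hKs⟩ := hK
  have hA : K ∩ U = K \ V := by
    ext x
    constructor
    · rintro ⟨hxK, hxU⟩; exact ⟨hxK, fun hxV => Set.disjoint_left.mp hUV hxU hxV⟩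
    · rintro ⟨hxK, hxV⟩
      rcases hKs hxK with h | h
      exacts [⟨hxK, h⟩, absurd h hxV]
  have hB : K ∩ V = K \ U := by
    ext x
    constructor
    · rintro ⟨hxK, hxV⟩; exact ⟨hxK, fun hxU => Set.disjoint_left.mp hUV hxU hxV⟩
    · rintro ⟨hxK, hxU⟩
      rcases hKs hxK with h | h
      exacts [absurd h hxU, ⟨hxK, h⟩]
  have hAc : IsCompact (K ∩ U) := hA ▸ hKc.diff hV
  have hBc : IsCompact (K ∩ V) := hB ▸ hKc.diff hU
  have hsplit : (K ∩ U) ∪ (K ∩ V) = K := by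
    rw [← Set.inter_union_distrib_left, inter_eq_left.mpr hKs]
  have hd : Disjoint (K ∩ U) (K ∩ V) :=
    hUV.mono inter_subset_right inter_subset_right
  have : lam K = lam (K ∩ U) + lam (K ∩ V) := by
    rw [← haddv _ _ hAc hBc hd, hsplit]
  rw [this]
  exact add_le_add (le_posVarOpen hAc inter_subset_right) (le_posVarOpen hBc inter_subset_right)

lemma posVarOpen_add_le_of_subset (hUV : Disjoint U V) (hUW : U ⊆ W) (hVW : V ⊆ W) :
    posVarOpen lam U + posVarOpen lam V ≤ posVarOpen lam W := by
  refine Aux.iSup_add_iSup_le fun K1 K2 => Aux.iSup_add_iSup_le fun h1 h2 => ?_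
  have hd : Disjoint K1 K2 := hUV.mono h1.2 h2.2
  rw [← haddv _ _ h1.1 h2.1 hd]
  exact le_posVarOpen (h1.1.union h2.1) (union_subset (h1.2.trans hUW) (h2.2.trans hVW))

lemma posVar_union [T2Space X] (hz : lam ∅ = 0) (hC : IsCompact C) (hK : IsCompact K)
    (hd : Disjoint C K) : posVar lam (C ∪ K) = posVar lam C + posVar lam K := by
  obtain ⟨S, T, hS, hT, hCS, hKT, hST⟩ := SeparatedNhds.of_isCompact_isCompact hC hK hd
  refine le_antisymm ?_ ?_
  · rw [posVar_eq_iInf lam C, posVar_eq_iInf lam K]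
    refine Aux.le_iInf_add_iInf (fun U => le_iInf fun _ => posVarOpen_nonneg hz)
      (fun V => le_iInf fun _ => posVarOpen_nonneg hz) fun U V =>
      Aux.le_iInf_add_iInf (fun _ => posVarOpen_nonneg hz) (fun _ => posVarOpen_nonneg hz)
        fun hU hV => ?_
    have h1 : posVar lam (C ∪ K) ≤ posVarOpen lam ((U ∩ S) ∪ (V ∩ T)) := by
      rw [posVar_eq_iInf]
      exact iInf₂_le _ ⟨(hU.1.inter hS).union (hV.1.inter hT),
        union_subset_union (subset_inter hU.2 hCS) (subset_inter hV.2 hKT)⟩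
    refine h1.trans ((posVarOpen_union_le haddv (hU.1.inter hS) (hV.1.inter hT)
      (hST.mono inter_subset_right inter_subset_right)).trans
      (add_le_add (posVarOpen_mono inter_subset_left) (posVarOpen_mono inter_subset_left)))
  · rw [posVar_eq_iInf lam (C ∪ K)]
    refine le_iInf₂ fun W hW => ?_
    have h1 : posVar lam C ≤ posVarOpen lam (W ∩ S) := by
      rw [posVar_eq_iInf]
      exact iInf₂_le _ ⟨hW.1.inter hS, subset_inter (subset_union_left.trans hW.2) hCS⟩
    have h2 : posVar lam K ≤ posVarOpen lam (W ∩ T) := by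
      rw [posVar_eq_iInf]
      exact iInf₂_le _ ⟨hW.1.inter hT, subset_inter (subset_union_right.trans hW.2) hKT⟩
    exact (add_le_add h1 h2).trans (posVarOpen_add_le_of_subset haddv
      (hST.mono inter_subset_right inter_subset_right) inter_subset_left inter_subset_left)

omit haddv

lemma posVar_inner (hU : IsOpen U) :
    posVar lam U = ⨆ (K : Set X) (_ : IsCompact K ∧ K ⊆ U), posVar lam K := by
  rw [posVar_open hU]
  refine le_antisymm (iSup₂_le fun K hK => le_iSup₂_of_le K hK (le_posVar hK.1 subset_rfl))
    (iSup₂_le fun K hK => (posVar_mono hK.2).trans_eq (posVar_open hU))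

lemma posVar_outer (F : Set X) :
    posVar lam F = ⨅ (U : Set X) (_ : IsOpen U ∧ F ⊆ U), posVar lam U := by
  rw [posVar_eq_iInf]
  exact le_antisymm (le_iInf₂ fun U hU => iInf₂_le_of_le U hU (posVar_open hU.1).ge)
    (le_iInf₂ fun U hU => iInf₂_le_of_le U hU (posVar_open hU.1).le)

end PosVar


section TotVar
variable [TopologicalSpace X] {lam : Set X → EReal} {U V W A B C K F : Set X}

lemma le_totVarOpen (n : ℕ) (K : Fin n → Set X)
    (h : (∀ i, IsCompact (K i) ∧ K i ⊆ U) ∧ Pairwise (Function.onFun Disjoint K)) :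
    ∑ i, max (lam (K i)) (-(lam (K i))) ≤ totVarOpen lam U :=
  le_iSup_of_le n (le_iSup_of_le K (le_iSup_of_le h le_rfl))

lemma totVarOpen_mono (h : U ⊆ V) : totVarOpen lam U ≤ totVarOpen lam V :=
  iSup_le fun n => iSup_le fun K => iSup_le fun hK =>
    le_totVarOpen n K ⟨fun i => ⟨(hK.1 i).1, ((hK.1 i).2).trans h⟩, hK.2⟩

lemma totVarOpen_nonneg : (0:EReal) ≤ totVarOpen lam U := by
  have := le_totVarOpen (lam := lam) (U := U) 0 (fun i => i.elim0)
    ⟨fun i => i.elim0, fun i j _ => i.elim0⟩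
  simpa using this

lemma totVar_eq_iInf (lam : Set X → EReal) (A : Set X) :
    totVar lam A = ⨅ (U : Set X) (_ : IsOpen U ∧ A ⊆ U), totVarOpen lam U := by
  rw [totVar]; split_ifs with h
  · exact le_antisymm (le_iInf₂ fun U hU => totVarOpen_mono hU.2) (iInf₂_le A ⟨h, subset_rfl⟩)
  · rfl

lemma totVar_open (h : IsOpen A) : totVar lam A = totVarOpen lam A := if_pos h

lemma totVar_mono (h : A ⊆ B) : totVar lam A ≤ totVar lam B := by
  rw [totVar_eq_iInf, totVar_eq_iInf]
  exact le_iInf₂ fun U hU => iInf₂_le U ⟨hU.1, h.trans hU.2⟩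

lemma totVar_nonneg (A : Set X) : 0 ≤ totVar lam A := by
  rw [totVar_eq_iInf]; exact le_iInf₂ fun U hU => totVarOpen_nonneg

lemma totVar_empty (hz : lam ∅ = 0) : totVar lam ∅ = 0 := by
  rw [totVar_open isOpen_empty]
  refine le_antisymm (iSup_le fun n => iSup_le fun K => iSup_le fun hK => le_of_eq ?_)
    totVarOpen_nonneg
  refine Finset.sum_eq_zero fun i _ => ?_
  rw [subset_empty_iff.mp (hK.1 i).2, hz]
  simp

lemma totVar_inner (hU : IsOpen U) :
    totVar lam U = ⨆ (K : Set X) (_ : IsCompact K ∧ K ⊆ U), totVar lam K := by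
  rw [totVar_open hU]
  refine le_antisymm (iSup_le fun n => iSup_le fun K => iSup_le fun hK => ?_)
    (iSup₂_le fun K hK => (totVar_mono hK.2).trans_eq (totVar_open hU))
  refine le_iSup₂_of_le (⋃ i, K i)
    ⟨isCompact_iUnion fun i => (hK.1 i).1, iUnion_subset fun i => (hK.1 i).2⟩ ?_
  rw [totVar_eq_iInf]
  exact le_iInf₂ fun W hW => le_totVarOpen n K
    ⟨fun i => ⟨(hK.1 i).1, ((subset_iUnion K i).trans hW.2)⟩, hK.2⟩

lemma totVar_outer (F : Set X) :
    totVar lam F = ⨅ (U : Set X) (_ : IsOpen U ∧ F ⊆ U), totVar lam U := by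
  rw [totVar_eq_iInf]
  exact le_antisymm (le_iInf₂ fun U hU => iInf₂_le_of_le U hU (totVar_open hU.1).ge)
    (le_iInf₂ fun U hU => iInf₂_le_of_le U hU (totVar_open hU.1).le)

variable (haddv : ∀ C K : Set X, IsCompact C → IsCompact K → Disjoint C K →
      lam (C ∪ K) = lam C + lam K)

include haddv

lemma totVarOpen_union_le (hU : IsOpen U) (hV : IsOpen V) (hUV : Disjoint U V) :
    totVarOpen lam (U ∪ V) ≤ totVarOpen lam U + totVarOpen lam V := by
  refine iSup_le fun n => iSup_le fun K => iSup_le fun hK => ?_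
  have key : ∀ i, IsCompact (K i ∩ U) ∧ IsCompact (K i ∩ V) ∧
      lam (K i) = lam (K i ∩ U) + lam (K i ∩ V) := by
    intro i
    obtain ⟨hKc, hKs⟩ := hK.1 i
    have hA : K i ∩ U = K i \ V := by
      ext x
      constructor
      · rintro ⟨hxK, hxU⟩; exact ⟨hxK, fun hxV => Set.disjoint_left.mp hUV hxU hxV⟩
      · rintro ⟨hxK, hxV⟩
        rcases hKs hxK with h | h
        exacts [⟨hxK, h⟩, absurd h hxV]
    have hB : K i ∩ V = K i \ U := by
      ext x
      constructor
      · rintro ⟨hxK, hxV⟩; exact ⟨hxK, fun hxU => Set.disjoint_left.mp hUV hxU hxV⟩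
      · rintro ⟨hxK, hxU⟩
        rcases hKs hxK with h | h
        exacts [absurd h hxU, ⟨hxK, h⟩]
    have hAc : IsCompact (K i ∩ U) := hA ▸ hKc.diff hV
    have hBc : IsCompact (K i ∩ V) := hB ▸ hKc.diff hU
    refine ⟨hAc, hBc, ?_⟩
    rw [← haddv _ _ hAc hBc (hUV.mono inter_subset_right inter_subset_right),
      ← Set.inter_union_distrib_left, inter_eq_left.mpr hKs]
  calc ∑ i, max (lam (K i)) (-(lam (K i)))
      ≤ ∑ i, (max (lam (K i ∩ U)) (-(lam (K i ∩ U))) +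
          max (lam (K i ∩ V)) (-(lam (K i ∩ V)))) := by
        refine Finset.sum_le_sum fun i _ => ?_
        rw [(key i).2.2]
        exact Aux.absE_triangle _ _
    _ = ∑ i, max (lam (K i ∩ U)) (-(lam (K i ∩ U))) +
          ∑ i, max (lam (K i ∩ V)) (-(lam (K i ∩ V))) := Finset.sum_add_distrib
    _ ≤ totVarOpen lam U + totVarOpen lam V := by
        refine add_le_add ?_ ?_
        · exact le_totVarOpen n (fun i => K i ∩ U)
            ⟨fun i => ⟨(key i).1, inter_subset_right⟩,
              fun i j hij => (hK.2 hij).mono inter_subset_left inter_subset_left⟩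
        · exact le_totVarOpen n (fun i => K i ∩ V)
            ⟨fun i => ⟨(key i).2.1, inter_subset_right⟩,
              fun i j hij => (hK.2 hij).mono inter_subset_left inter_subset_left⟩

omit haddv

lemma totVarOpen_add_le_of_subset (hUV : Disjoint U V) (hUW : U ⊆ W) (hVW : V ⊆ W) :
    totVarOpen lam U + totVarOpen lam V ≤ totVarOpen lam W := by
  refine Aux.iSup_add_iSup_le fun n m => Aux.iSup_add_iSup_le fun K1 K2 =>
    Aux.iSup_add_iSup_le fun h1 h2 => ?_
  set M : Fin (n + m) → Set X := Fin.append K1 K2 with hM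
  have hMc : ∀ i, IsCompact (M i) ∧ M i ⊆ W := by
    refine Fin.addCases (fun i => ?_) (fun i => ?_)
    · rw [hM, Fin.append_left]
      exact ⟨(h1.1 i).1, ((h1.1 i).2).trans hUW⟩
    · rw [hM, Fin.append_right]
      exact ⟨(h2.1 i).1, ((h2.1 i).2).trans hVW⟩
  have hMd : Pairwise (Function.onFun Disjoint M) := by
    refine Fin.addCases (fun i => ?_) (fun i => ?_) <;>
      refine Fin.addCases (fun j => ?_) (fun j => ?_) <;>
      intro hij <;> simp only [Function.onFun, hM, Fin.append_left, Fin.append_right]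
    · exact h1.2 (fun h => hij (congrArg _ h))
    · exact hUV.mono (h1.1 i).2 (h2.1 j).2
    · exact (hUV.mono (h1.1 j).2 (h2.1 i).2).symm
    · exact h2.2 (fun h => hij (congrArg _ h))
  have hsum : ∑ i, max (lam (M i)) (-(lam (M i))) =
      ∑ i, max (lam (K1 i)) (-(lam (K1 i))) + ∑ i, max (lam (K2 i)) (-(lam (K2 i))) := by
    rw [Fin.sum_univ_add]
    simp [hM, Fin.append_left, Fin.append_right]
  exact hsum ▸ le_totVarOpen (n + m) M ⟨hMc, hMd⟩

include haddv

lemma totVar_union [T2Space X] (hC : IsCompact C) (hK : IsCompact K)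
    (hd : Disjoint C K) : totVar lam (C ∪ K) = totVar lam C + totVar lam K := by
  obtain ⟨S, T, hS, hT, hCS, hKT, hST⟩ := SeparatedNhds.of_isCompact_isCompact hC hK hd
  refine le_antisymm ?_ ?_
  · rw [totVar_eq_iInf lam C, totVar_eq_iInf lam K]
    refine Aux.le_iInf_add_iInf (fun U => le_iInf fun _ => totVarOpen_nonneg)
      (fun V => le_iInf fun _ => totVarOpen_nonneg) fun U V =>
      Aux.le_iInf_add_iInf (fun _ => totVarOpen_nonneg) (fun _ => totVarOpen_nonneg)
        fun hU hV => ?_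
    have h1 : totVar lam (C ∪ K) ≤ totVarOpen lam ((U ∩ S) ∪ (V ∩ T)) := by
      rw [totVar_eq_iInf]
      exact iInf₂_le _ ⟨(hU.1.inter hS).union (hV.1.inter hT),
        union_subset_union (subset_inter hU.2 hCS) (subset_inter hV.2 hKT)⟩
    refine h1.trans ((totVarOpen_union_le haddv (hU.1.inter hS) (hV.1.inter hT)
      (hST.mono inter_subset_right inter_subset_right)).trans
      (add_le_add (totVarOpen_mono inter_subset_left) (totVarOpen_mono inter_subset_left)))
  · rw [totVar_eq_iInf lam (C ∪ K)]
    refine le_iInf₂ fun W hW => ?_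
    have h1 : totVar lam C ≤ totVarOpen lam (W ∩ S) := by
      rw [totVar_eq_iInf]
      exact iInf₂_le _ ⟨hW.1.inter hS, subset_inter (subset_union_left.trans hW.2) hCS⟩
    have h2 : totVar lam K ≤ totVarOpen lam (W ∩ T) := by
      rw [totVar_eq_iInf]
      exact iInf₂_le _ ⟨hW.1.inter hT, subset_inter (subset_union_right.trans hW.2) hKT⟩
    exact (add_le_add h1 h2).trans (totVarOpen_add_le_of_subset
      (hST.mono inter_subset_right inter_subset_right) inter_subset_left inter_subset_left)

end TotVar

section Final
variable [TopologicalSpace X] {lam : Set X → EReal} {U V A : Set X}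

variable (haddv : ∀ C K : Set X, IsCompact C → IsCompact K → Disjoint C K →
      lam (C ∪ K) = lam C + lam K)

include haddv

lemma lam_empty (hne : ∃ K : Set X, IsCompact K ∧ lam K ≠ ⊤ ∧ lam K ≠ ⊥) : lam ∅ = 0 := by
  obtain ⟨K, hK, hKt, hKb⟩ := hne
  have h := haddv K ∅ hK isCompact_empty (by simp)
  rw [union_empty] at h
  obtain ⟨x, hx⟩ : ∃ x : ℝ, lam K = (x : EReal) :=
    ⟨(lam K).toReal, (EReal.coe_toReal hKt hKb).symm⟩
  rw [hx] at h
  revert h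
  generalize lam ∅ = e
  induction e using EReal.rec with
  | bot => intro h; rw [EReal.add_bot] at h; exact absurd h (EReal.coe_ne_bot x)
  | top => intro h; rw [EReal.add_top_of_ne_bot (EReal.coe_ne_bot x)] at h
           exact absurd h (EReal.coe_ne_top x)
  | coe y => intro h; norm_cast at h ⊢; linarith

lemma lam_biUnion (hz : lam ∅ = 0) {n : ℕ} {K : Fin n → Set X}
    (hc : ∀ i, IsCompact (K i)) (hd : Pairwise (Function.onFun Disjoint K))
    (s : Finset (Fin n)) : lam (⋃ i ∈ s, K i) = ∑ i ∈ s, lam (K i) := by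
  classical
  induction s using Finset.induction_on with
  | empty => simpa using hz
  | @insert a s ha ih =>
    rw [Finset.set_biUnion_insert, Finset.sum_insert ha, ← ih,
      haddv _ _ (hc a) (s.isCompact_biUnion fun i _ => hc i) ?_]
    exact Set.disjoint_iUnion₂_right.mpr fun i hi => hd fun h => ha (h ▸ hi)

omit haddv

variable (haddn : ∀ C K : Set X, IsCompact C → IsCompact K → Disjoint C K →
      (-(lam (C ∪ K))) = -(lam C) + -(lam K))

include haddv haddn

lemma totVarOpen_le_add (hz : lam ∅ = 0) :
    totVarOpen lam U ≤ posVarOpen lam U + posVarOpen (fun K => -(lam K)) U := by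
  classical
  refine iSup_le fun n => iSup_le fun K => iSup_le fun hK => ?_
  set P : Finset (Fin n) := Finset.univ.filter (fun i => -(lam (K i)) ≤ lam (K i)) with hP
  have hsplit : ∑ i, max (lam (K i)) (-(lam (K i))) =
      ∑ i ∈ P, lam (K i) + ∑ i ∈ Finset.univ.filter (fun i => ¬(-(lam (K i)) ≤ lam (K i))),
        (-(lam (K i))) := by
    rw [← Finset.sum_filter_add_sum_filter_not Finset.univ
      (fun i => -(lam (K i)) ≤ lam (K i))]
    congr 1
    · exact Finset.sum_congr rfl fun i hi => max_eq_left (Finset.mem_filter.mp hi).2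
    · exact Finset.sum_congr rfl fun i hi =>
        max_eq_right (le_of_lt (lt_of_not_ge (Finset.mem_filter.mp hi).2))
  rw [hsplit]
  refine add_le_add ?_ ?_
  · rw [← lam_biUnion haddv hz (fun i => (hK.1 i).1) hK.2]
    exact le_posVarOpen (P.isCompact_biUnion fun i _ => (hK.1 i).1)
      (iUnion₂_subset fun i _ => (hK.1 i).2)
  · have haddn' : ∀ C K : Set X, IsCompact C → IsCompact K → Disjoint C K →
        (fun A => -(lam A)) (C ∪ K) = (fun A => -(lam A)) C + (fun A => -(lam A)) K :=
      fun C K hC hKc hdk => haddn C K hC hKc hdk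
    have hzn : (fun A => -(lam A)) ∅ = 0 := by simp [hz]
    rw [← lam_biUnion (lam := fun A => -(lam A)) haddn' hzn (fun i => (hK.1 i).1) hK.2]
    exact le_posVarOpen (lam := fun A => -(lam A))
      (Finset.isCompact_biUnion _ fun i _ => (hK.1 i).1)
      (iUnion₂_subset fun i _ => (hK.1 i).2)

lemma totVar_le_add (hz : lam ∅ = 0) (A : Set X) :
    totVar lam A ≤ posVar lam A + posVar (fun K => -(lam K)) A := by
  have hzn : (fun A => -(lam A)) ∅ = 0 := by simp [hz]
  rw [posVar_eq_iInf lam A, posVar_eq_iInf (fun K => -(lam K)) A]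
  refine Aux.le_iInf_add_iInf (fun U => le_iInf fun _ => posVarOpen_nonneg hz)
    (fun V => le_iInf fun _ => posVarOpen_nonneg hzn) fun U V =>
    Aux.le_iInf_add_iInf (fun _ => posVarOpen_nonneg hz) (fun _ => posVarOpen_nonneg hzn)
      fun hU hV => ?_
  calc totVar lam A ≤ totVarOpen lam (U ∩ V) := by
        rw [totVar_eq_iInf]
        exact iInf₂_le _ ⟨hU.1.inter hV.1, subset_inter hU.2 hV.2⟩
    _ ≤ posVarOpen lam (U ∩ V) + posVarOpen (fun K => -(lam K)) (U ∩ V) :=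
        totVarOpen_le_add haddv haddn hz
    _ ≤ posVarOpen lam U + posVarOpen (fun K => -(lam K)) V :=
        add_le_add (posVarOpen_mono inter_subset_left) (posVarOpen_mono inter_subset_right)

end Final

/-- Proposition 2.4 (I): for a signed set function `λ` on compact subsets of a locally
compact Hausdorff space, assuming at most one of `∞, -∞`, not identically `∞` or `-∞`, and
finitely additive on compact sets, the set functions `λ⁺`, `λ⁻ = (-λ)⁺` and `|λ|` are
deficient topological measures, and `|λ| ≤ λ⁺ + λ⁻` on open and closed sets. -/
theorem posVar_negVar_totVar_isDTM
    [TopologicalSpace X] [LocallyCompactSpace X] [T2Space X]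
    (lam : Set X → EReal)
    (hadd : ∀ C K : Set X, IsCompact C → IsCompact K → Disjoint C K →
      lam (C ∪ K) = lam C + lam K)
    (hone : (∀ K : Set X, IsCompact K → lam K ≠ ⊤) ∨ (∀ K : Set X, IsCompact K → lam K ≠ ⊥))
    (hne : ∃ K : Set X, IsCompact K ∧ lam K ≠ ⊤ ∧ lam K ≠ ⊥) :
    IsDTME (posVar lam) ∧ IsDTME (negVar lam) ∧ IsDTME (totVar lam) ∧
    ∀ A : Set X, IsOpen A ∨ IsClosed A → totVar lam A ≤ posVar lam A + negVar lam A := by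
  have hz : lam ∅ = 0 := lam_empty hadd hne
  have haddn : ∀ C K : Set X, IsCompact C → IsCompact K → Disjoint C K →
      (-(lam (C ∪ K))) = -(lam C) + -(lam K) := by
    intro C K hC hK hd
    rw [hadd C K hC hK hd]
    rcases hone with h | h
    · exact EReal.neg_add (Or.inr (h K hK)) (Or.inl (h C hC))
    · exact EReal.neg_add (Or.inl (h C hC)) (Or.inr (h K hK))
  have haddv' : ∀ C K : Set X, IsCompact C → IsCompact K → Disjoint C K →
      (fun A => -(lam A)) (C ∪ K) = (fun A => -(lam A)) C + (fun A => -(lam A)) K :=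
    fun C K hC hK hd => haddn C K hC hK hd
  have hz' : (fun A => -(lam A)) ∅ = 0 := by simp [hz]
  unfold negVar
  refine ⟨⟨fun A _ => posVar_nonneg hz A,
      ⟨∅, Or.inl isOpen_empty, by rw [posVar_empty hz]; exact EReal.zero_ne_top⟩,
      fun C K hC hK hd => posVar_union hadd hz hC hK hd,
      fun U hU => posVar_inner hU, fun F _ => posVar_outer F⟩,
    ⟨fun A _ => posVar_nonneg hz' A,
      ⟨∅, Or.inl isOpen_empty, by rw [posVar_empty hz']; exact EReal.zero_ne_top⟩,
      fun C K hC hK hd => posVar_union haddv' hz' hC hK hd,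
      fun U hU => posVar_inner hU, fun F _ => posVar_outer F⟩,
    ⟨fun A _ => totVar_nonneg A,
      ⟨∅, Or.inl isOpen_empty, by rw [totVar_empty hz]; exact EReal.zero_ne_top⟩,
      fun C K hC hK hd => totVar_union hadd hC hK hd,
      fun U hU => totVar_inner hU, fun F _ => totVar_outer F⟩,
    fun A _ => totVar_le_add hadd haddn hz A⟩
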